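/- For fixed x ∈ (0,1), the Beta function satisfies the asymptotic B(αx+1, α(1−x)+1) ~ √(2π x (1−x)/α) · x^{αx} (1−x)^{α(1−x)} as α → ∞; that is, lim_{α→∞} B(αx+1, α(1−x)+1) · √(α/(2π x (1−x))) · x^{−αx} (1−x)^{−α(1−x)} = 1. -/

import Mathlib

open Filter Real Set Nat Topology




lemma wendel_upper {t s : ℝ} (ht : 0 < t) (hs0 : 0 ≤ s) (hs1 : s ≤ 1) :
    Real.Gamma (t + s) ≤ Real.Gamma t * t ^ s := by
  have h := Real.convexOn_log_Gamma.2 (Set.mem_Ioi.mpr ht)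
    (Set.mem_Ioi.mpr (by linarith : (0:ℝ) < t + 1)) (by linarith : 0 ≤ 1 - s) hs0 (by ring)
  simp only [Function.comp, smul_eq_mul] at h
  have key : Real.log (Real.Gamma (t + s)) ≤ Real.log (Real.Gamma t) + s * Real.log t := by
    have e1 : (1 - s) * t + s * (t + 1) = t + s := by ring
    rw [e1] at h
    rw [Real.Gamma_add_one ht.ne', Real.log_mul ht.ne' (Real.Gamma_pos_of_pos ht).ne'] at h
    nlinarith [h]
  have hG : 0 < Real.Gamma (t + s) := Real.Gamma_pos_of_pos (by linarith)
  calc Real.Gamma (t + s) = Real.exp (Real.log (Real.Gamma (t + s))) := (Real.exp_log hG).symm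
    _ ≤ Real.exp (Real.log (Real.Gamma t) + s * Real.log t) := Real.exp_le_exp.mpr key
    _ = Real.Gamma t * t ^ s := by
        rw [Real.exp_add, Real.exp_log (Real.Gamma_pos_of_pos ht),
          Real.rpow_def_of_pos ht, mul_comm s]

lemma wendel_lower {t s : ℝ} (ht : 0 < t) (hs0 : 0 ≤ s) (hs1 : s ≤ 1) :
    t * Real.Gamma t ≤ Real.Gamma (t + s) * (t + s) ^ (1 - s) := by
  have hts : 0 < t + s := by linarith
  have h := Real.convexOn_log_Gamma.2 (Set.mem_Ioi.mpr hts)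
    (Set.mem_Ioi.mpr (by linarith : (0:ℝ) < t + s + 1)) hs0 (by linarith : 0 ≤ 1 - s) (by ring)
  simp only [Function.comp, smul_eq_mul] at h
  have e1 : s * (t + s) + (1 - s) * (t + s + 1) = t + 1 := by ring
  rw [e1, Real.Gamma_add_one ht.ne', Real.Gamma_add_one hts.ne',
    Real.log_mul ht.ne' (Real.Gamma_pos_of_pos ht).ne',
    Real.log_mul hts.ne' (Real.Gamma_pos_of_pos hts).ne'] at h
  have key : Real.log t + Real.log (Real.Gamma t)
      ≤ Real.log (Real.Gamma (t + s)) + (1 - s) * Real.log (t + s) := by nlinarith [h]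
  have hG : 0 < Real.Gamma t := Real.Gamma_pos_of_pos ht
  have hGts : 0 < Real.Gamma (t + s) := Real.Gamma_pos_of_pos hts
  calc t * Real.Gamma t = Real.exp (Real.log t + Real.log (Real.Gamma t)) := by
        rw [Real.exp_add, Real.exp_log ht, Real.exp_log hG]
    _ ≤ Real.exp (Real.log (Real.Gamma (t + s)) + (1 - s) * Real.log (t + s)) :=
        Real.exp_le_exp.mpr key
    _ = Real.Gamma (t + s) * (t + s) ^ (1 - s) := by
        rw [Real.exp_add, Real.exp_log hGts, Real.rpow_def_of_pos hts, mul_comm (1-s)]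




noncomputable def stirApprox (t : ℝ) : ℝ :=
  Real.sqrt (2 * Real.pi) * t ^ (t - 1/2) * Real.exp (-t)

lemma stirApprox_pos {t : ℝ} (ht : 0 < t) : 0 < stirApprox t := by
  unfold stirApprox
  have := Real.pi_pos
  positivity

lemma gamma_nat_div_stirApprox (n : ℕ) (hn : 1 ≤ n) :
    Real.Gamma n / stirApprox n = Stirling.stirlingSeq n / Real.sqrt Real.pi := by
  obtain ⟨m, rfl⟩ := Nat.exists_eq_add_of_le hn
  set n := 1 + m with hn'
  have hn0 : (0:ℝ) < n := by positivity
  have hΓ : Real.Gamma n = (m ! : ℝ) := by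
    rw [show ((n:ℕ):ℝ) = (m:ℝ) + 1 by push_cast [hn']; ring, Real.Gamma_nat_eq_factorial]
  have hfac : (n ! : ℝ) = n * m ! := by
    rw [hn', Nat.add_comm]
    push_cast [Nat.factorial_succ]
    ring
  have hrpow : (n:ℝ) ^ ((n:ℝ) - 1/2) = (n:ℝ) ^ (n:ℕ) / Real.sqrt n := by
    rw [show ((n:ℝ) - 1/2) = (n:ℝ) + (-(1/2)) by ring, Real.rpow_add hn0,
      Real.rpow_natCast, Real.rpow_neg hn0.le, Real.sqrt_eq_rpow]
    ring
  have hsq2 : Real.sqrt (2 * Real.pi) = Real.sqrt 2 * Real.sqrt Real.pi :=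
    Real.sqrt_mul (by norm_num) _
  have hsq2n : Real.sqrt (2 * (n:ℝ)) = Real.sqrt 2 * Real.sqrt n :=
    Real.sqrt_mul (by norm_num) _
  have hsn : Real.sqrt (n:ℝ) * Real.sqrt (n:ℝ) = (n:ℝ) := Real.mul_self_sqrt hn0.le
  have hsnpos : (0:ℝ) < Real.sqrt n := Real.sqrt_pos.mpr hn0
  have hspi : (0:ℝ) < Real.sqrt Real.pi := Real.sqrt_pos.mpr Real.pi_pos
  have hs2 : (0:ℝ) < Real.sqrt 2 := by positivity
  have hexp : (0:ℝ) < Real.exp (n:ℝ) := Real.exp_pos _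
  unfold stirApprox Stirling.stirlingSeq
  rw [hΓ, hrpow, hsq2, hsq2n, hfac, Real.exp_neg, div_pow]
  have hnn : (0:ℝ) < (n:ℝ) ^ (n:ℕ) := by positivity
  field_simp
  ring_nf
  rw [Real.sq_sqrt (by positivity : (0:ℝ) ≤ ((1+m:ℕ):ℝ))]
  rw [← Real.exp_nat_mul, mul_one, hn']





-- log bounds
lemma log_one_sub_le {u : ℝ} (hu : u < 1) : Real.log (1 - u) ≤ -u := by
  rcases le_or_gt (1 - u) 0 with h | h
  · linarith
  · have := Real.log_le_sub_one_of_pos h; linarith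

lemma log_one_sub_ge {u : ℝ} (hu0 : 0 ≤ u) (hu : u ≤ 1/2) :
    -u - 2 * u ^ 2 ≤ Real.log (1 - u) := by
  have h1 : (0:ℝ) < 1 - u := by linarith
  have h2 := Real.log_le_sub_one_of_pos (inv_pos.mpr h1)
  rw [Real.log_inv] at h2
  have h3 : (1 - u)⁻¹ ≤ 1 + u + 2 * u ^ 2 := by
    rw [inv_le_iff_one_le_mul₀ h1]
    nlinarith
  linarith







lemma log_stirApprox {t : ℝ} (ht : 0 < t) :
    Real.log (stirApprox t)
      = Real.log (Real.sqrt (2 * Real.pi)) + (t - 1/2) * Real.log t + (-t) := by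
  unfold stirApprox
  have h1 : Real.sqrt (2 * Real.pi) ≠ 0 := by
    have := Real.pi_pos; positivity
  have h2 : (t : ℝ) ^ (t - 1/2) ≠ 0 := (Real.rpow_pos_of_pos ht _).ne'
  rw [Real.log_mul (by positivity) (Real.exp_ne_zero _), Real.log_mul h1 h2,
    Real.log_rpow ht, Real.log_exp]

section bounds

variable {t : ℝ} (ht : 2 ≤ t)

set_option maxHeartbeats 1000000 in
lemma stirling_bounds {t : ℝ} (ht : 2 ≤ t) :
    Stirling.stirlingSeq ⌊t⌋₊ / Real.sqrt Real.pi * Real.exp (-(4/t))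
        ≤ Real.Gamma t / stirApprox t ∧
      Real.Gamma t / stirApprox t
        ≤ Stirling.stirlingSeq ⌊t⌋₊ / Real.sqrt Real.pi * Real.exp (1/t) := by
  have ht0 : (0:ℝ) < t := by linarith
  set n : ℕ := ⌊t⌋₊ with hn
  have hn2 : 2 ≤ n := Nat.le_floor (by exact_mod_cast ht)
  have hnt : (n:ℝ) ≤ t := Nat.floor_le ht0.le
  have htn1 : t < n + 1 := Nat.lt_floor_add_one t
  have hn0 : (0:ℝ) < n := by exact_mod_cast Nat.lt_of_lt_of_le (by norm_num) hn2
  set s : ℝ := t - n with hs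
  have hs0 : 0 ≤ s := by simp [hs]; linarith
  have hs1 : s < 1 := by simp [hs]; linarith
  have hts : t = (n:ℝ) + s := by simp [hs]
  -- the ratio R
  set R : ℝ := (n:ℝ) ^ s * stirApprox n / stirApprox t with hRdef
  have hRpos : 0 < R :=
    div_pos (mul_pos (Real.rpow_pos_of_pos hn0 s) (stirApprox_pos hn0)) (stirApprox_pos ht0)
  have hlogR : Real.log R = s + (t - 1/2) * (Real.log n - Real.log t) := by
    rw [hRdef, Real.log_div (mul_pos (Real.rpow_pos_of_pos hn0 s) (stirApprox_pos hn0)).ne'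
      (stirApprox_pos ht0).ne',
      Real.log_mul (Real.rpow_pos_of_pos hn0 s).ne' (stirApprox_pos hn0).ne',
      Real.log_rpow hn0, log_stirApprox hn0, log_stirApprox ht0]
    have : (n:ℝ) = t - s := by linarith
    rw [this]; ring
  -- u = s / t
  set u : ℝ := s / t with hu
  have htu : t * u = s := by rw [hu]; field_simp
  have hu0 : 0 ≤ u := div_nonneg hs0 ht0.le
  have hut : u ≤ 1/t := by
    rw [hu, div_le_div_iff₀ ht0 ht0]; nlinarith
  have hu2 : u ≤ 1/2 := le_trans hut (by rw [div_le_div_iff₀ ht0 (by norm_num)]; linarith)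
  have hnu : (n:ℝ) / t = 1 - u := by field_simp [hu]; linarith
  have hlog_eq : Real.log n - Real.log t = Real.log (1 - u) := by
    rw [← hnu, Real.log_div hn0.ne' ht0.ne']
  -- bounds on log(1-u)
  have hlub : Real.log (1 - u) ≤ -u := log_one_sub_le (by linarith)
  have hllb : -u - 2 * u ^ 2 ≤ Real.log (1 - u) := log_one_sub_ge hu0 hu2
  have hl0 : Real.log (1 - u) ≤ 0 := Real.log_nonpos (by linarith) (by linarith)
  -- bounds on log R
  have hlogR_ub : Real.log R ≤ 1 / t := by
    rw [hlogR, hlog_eq]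
    nlinarith [mul_le_mul_of_nonneg_left hlub (by linarith : (0:ℝ) ≤ t - 1/2)]
  have hlogR_lb : -(2 / t) ≤ Real.log R := by
    rw [hlogR, hlog_eq]
    have h1 : t * Real.log (1 - u) ≤ (t - 1/2) * Real.log (1 - u) :=
      mul_le_mul_of_nonpos_right (by linarith) hl0
    have h2 : t * (-u - 2 * u ^ 2) ≤ t * Real.log (1 - u) :=
      mul_le_mul_of_nonneg_left hllb ht0.le
    have e : t * (-u - 2 * u ^ 2) = -s - 2 * (s * u) := by rw [← htu]; ring
    have hsu : s * u ≤ 1 / t := by nlinarith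
    have h3 : 2 * (s * u) ≤ 2 * (1/t) := by linarith
    have h4 : 2 * (1/t) = 2/t := by ring
    nlinarith [h1, h2, e, h3, h4]
  have hRub : R ≤ Real.exp (1 / t) := by
    calc R = Real.exp (Real.log R) := (Real.exp_log hRpos).symm
    _ ≤ _ := Real.exp_le_exp.mpr hlogR_ub
  have hRlb : Real.exp (-(2 / t)) ≤ R := by
    calc Real.exp (-(2/t)) ≤ Real.exp (Real.log R) := Real.exp_le_exp.mpr hlogR_lb
    _ = R := Real.exp_log hRpos
  -- the P factor
  set P : ℝ := ((n:ℝ) / t) ^ (1 - s) with hPdef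
  have hPpos : 0 < P := Real.rpow_pos_of_pos (by positivity) _
  have hPlb : Real.exp (-(2 / t)) ≤ P := by
    have hlogP : Real.log P = (1 - s) * Real.log (1 - u) := by
      rw [hPdef, Real.log_rpow (by positivity), hnu]
    have : -(2/t) ≤ Real.log P := by
      rw [hlogP]
      have h1 : 1 * Real.log (1 - u) ≤ (1 - s) * Real.log (1 - u) :=
        mul_le_mul_of_nonpos_right (by linarith) hl0
      rw [one_mul] at h1
      have h2u : 2 * u ^ 2 ≤ u := by nlinarith
      have h3 : 2 * u ≤ 2 * (1/t) := by linarith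
      have h4 : 2 * (1/t) = 2/t := by ring
      nlinarith [h1, hllb, h2u, h3, h4]
    calc Real.exp (-(2/t)) ≤ Real.exp (Real.log P) := Real.exp_le_exp.mpr this
    _ = P := Real.exp_log hPpos
  -- positivity facts
  have hGn : 0 < Real.Gamma n := Real.Gamma_pos_of_pos hn0
  have hGt : 0 < Real.Gamma t := Real.Gamma_pos_of_pos ht0
  have hAn : 0 < stirApprox n := stirApprox_pos hn0
  have hAt : 0 < stirApprox t := stirApprox_pos ht0
  have hratio : Real.Gamma n / stirApprox n = Stirling.stirlingSeq n / Real.sqrt Real.pi :=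
    gamma_nat_div_stirApprox n (by omega)
  constructor
  · -- lower bound
    have hw := wendel_lower hn0 hs0 hs1.le
    rw [← hts] at hw
    -- Gamma t ≥ Gamma n * n^s * P
    have hnsplit : (n:ℝ) ^ s * (n:ℝ) ^ (1 - s) = (n:ℝ) := by
      rw [← Real.rpow_add hn0]; norm_num
    have hPval : P = (n:ℝ) ^ (1 - s) / t ^ (1 - s) := by
      rw [hPdef, Real.div_rpow hn0.le ht0.le]
    have htpow : 0 < t ^ (1 - s) := Real.rpow_pos_of_pos ht0 _
    have hGtlb : Real.Gamma n * (n:ℝ) ^ s * P ≤ Real.Gamma t := by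
      rw [hPval]
      rw [← div_le_iff₀ htpow] at hw
      calc Real.Gamma n * (n:ℝ)^s * ((n:ℝ)^(1-s) / t^(1-s))
          = (n:ℝ) * Real.Gamma n / t ^ (1-s) := by
            field_simp
            nlinarith [hnsplit]
        _ ≤ Real.Gamma t := hw
    have key : Real.Gamma n / stirApprox n * (R * P) ≤ Real.Gamma t / stirApprox t := by
      have : Real.Gamma n / stirApprox n * (R * P)
          = Real.Gamma n * (n:ℝ)^s * P / stirApprox t := by
        rw [hRdef]; field_simp
      rw [this]
      exact div_le_div_of_nonneg_right hGtlb hAt.le |>.trans_eq rfl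
    calc Stirling.stirlingSeq n / Real.sqrt Real.pi * Real.exp (-(4/t))
        = Real.Gamma n / stirApprox n * (Real.exp (-(2/t)) * Real.exp (-(2/t))) := by
          rw [hratio, ← Real.exp_add]; ring_nf
      _ ≤ Real.Gamma n / stirApprox n * (R * P) := by
          apply mul_le_mul_of_nonneg_left _ (by positivity)
          exact mul_le_mul hRlb hPlb (Real.exp_pos _).le hRpos.le
      _ ≤ Real.Gamma t / stirApprox t := key
  · -- upper bound
    have hw := wendel_upper hn0 hs0 hs1.le
    rw [← hts] at hw
    calc Real.Gamma t / stirApprox t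
        ≤ Real.Gamma n * (n:ℝ) ^ s / stirApprox t := div_le_div_of_nonneg_right hw hAt.le |>.trans_eq rfl
      _ = Real.Gamma n / stirApprox n * R := by rw [hRdef]; field_simp
      _ ≤ Real.Gamma n / stirApprox n * Real.exp (1/t) := by
          apply mul_le_mul_of_nonneg_left hRub (by positivity)
      _ = Stirling.stirlingSeq n / Real.sqrt Real.pi * Real.exp (1/t) := by rw [hratio]

end bounds

lemma tendsto_exp_const_div (c : ℝ) :
    Tendsto (fun t : ℝ => Real.exp (c / t)) atTop (𝓝 1) := by
  have h0 : Tendsto (fun t : ℝ => c / t) atTop (𝓝 0) :=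
    tendsto_const_nhds.div_atTop tendsto_id
  have := (Real.continuous_exp.tendsto 0).comp h0
  simpa [Function.comp_def] using this

lemma tendsto_gamma_div_stirApprox :
    Tendsto (fun t : ℝ => Real.Gamma t / stirApprox t) atTop (𝓝 1) := by
  have hspi : Real.sqrt Real.pi ≠ 0 := by
    have := Real.pi_pos; positivity
  have hstir : Tendsto (fun t : ℝ => Stirling.stirlingSeq ⌊t⌋₊ / Real.sqrt Real.pi)
      atTop (𝓝 1) := by
    have h := Stirling.tendsto_stirlingSeq_sqrt_pi.comp (tendsto_nat_floor_atTop (α := ℝ))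
    have h2 := h.div_const (Real.sqrt Real.pi)
    rwa [div_self hspi] at h2
  have hlo : Tendsto (fun t : ℝ =>
      Stirling.stirlingSeq ⌊t⌋₊ / Real.sqrt Real.pi * Real.exp (-(4/t))) atTop (𝓝 1) := by
    have := hstir.mul ((tendsto_exp_const_div (-4)).congr (fun t => by rw [neg_div]))
    simpa using this
  have hhi : Tendsto (fun t : ℝ =>
      Stirling.stirlingSeq ⌊t⌋₊ / Real.sqrt Real.pi * Real.exp (1/t)) atTop (𝓝 1) := by
    have := hstir.mul (tendsto_exp_const_div 1)
    simpa using this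
  refine tendsto_of_tendsto_of_tendsto_of_le_of_le' hlo hhi ?_ ?_
  · filter_upwards [eventually_ge_atTop (2:ℝ)] with t ht using (stirling_bounds ht).1
  · filter_upwards [eventually_ge_atTop (2:ℝ)] with t ht using (stirling_bounds ht).2

lemma tendsto_add_half_mul_log_one_plus :
    Tendsto (fun t : ℝ => (t + 1/2) * Real.log (1 + 1/t)) atTop (𝓝 1) := by
  have h1 : Tendsto (fun t : ℝ => t * Real.log (1 + 1/t)) atTop (𝓝 1) := by
    have := Real.tendsto_mul_log_one_add_div_atTop 1
    simpa using this
  have h2 : Tendsto (fun t : ℝ => Real.log (1 + 1/t)) atTop (𝓝 0) := by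
    have h0 : Tendsto (fun t : ℝ => 1 + 1/t) atTop (𝓝 1) := by
      have hh : Tendsto (fun t : ℝ => 1/t) atTop (𝓝 0) :=
        tendsto_const_nhds.div_atTop tendsto_id
      simpa using (tendsto_const_nhds (x := (1:ℝ))).add hh
    have := (Real.continuousAt_log (by norm_num)).tendsto.comp h0
    simpa [Function.comp_def] using this
  have h3 := h1.add (h2.const_mul (1/2))
  norm_num at h3
  exact h3.congr (fun t => by ring)

lemma tendsto_add_mul_log_one_plus (c d : ℝ) :
    Tendsto (fun t : ℝ => (t + d) * Real.log (1 + c/t)) atTop (𝓝 c) := by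
  have h1 : Tendsto (fun t : ℝ => t * Real.log (1 + c/t)) atTop (𝓝 c) :=
    Real.tendsto_mul_log_one_add_div_atTop c
  have h2 : Tendsto (fun t : ℝ => Real.log (1 + c/t)) atTop (𝓝 0) := by
    have h0 : Tendsto (fun t : ℝ => 1 + c/t) atTop (𝓝 1) := by
      have hh : Tendsto (fun t : ℝ => c/t) atTop (𝓝 0) :=
        tendsto_const_nhds.div_atTop tendsto_id
      simpa using (tendsto_const_nhds (x := (1:ℝ))).add hh
    have := (Real.continuousAt_log (by norm_num)).tendsto.comp h0
    simpa [Function.comp_def] using this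
  have h3 := h1.add (h2.const_mul d)
  norm_num at h3
  exact h3.congr (fun t => by ring)

/-- The Beta function `B(u,v) = Γ(u)Γ(v)/Γ(u+v)`. -/
noncomputable def betaFn (u v : ℝ) : ℝ :=
  Real.Gamma u * Real.Gamma v / Real.Gamma (u + v)

theorem stmt_5 (x : ℝ) (hx : x ∈ Set.Ioo (0:ℝ) 1) :
    Tendsto (fun α : ℝ =>
        betaFn (α * x + 1) (α * (1 - x) + 1) *
          Real.sqrt (α / (2 * Real.pi * x * (1 - x))) *
          x ^ (-(α * x)) * (1 - x) ^ (-(α * (1 - x))))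
      atTop (nhds 1) := by
  obtain ⟨hx0, hx1⟩ := hx
  have h1x : (0:ℝ) < 1 - x := by linarith
  have hπ := Real.pi_pos
  -- the deterministic factor
  set W : ℝ → ℝ := fun α =>
    stirApprox (α * x + 1) * stirApprox (α * (1 - x) + 1) / stirApprox (α + 2) *
      Real.sqrt (α / (2 * Real.pi * x * (1 - x))) *
      x ^ (-(α * x)) * (1 - x) ^ (-(α * (1 - x))) with hW
  -- log of W for positive α
  have hlogW : ∀ α : ℝ, 0 < α → Real.log (W α) =
      (α * x + 1/2) * Real.log (1 + 1/(α * x))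
        + (α * (1 - x) + 1/2) * Real.log (1 + 1/(α * (1 - x)))
        - (α + 3/2) * Real.log (1 + 2/α) := by
    intro α hα
    have ha : 0 < α * x := mul_pos hα hx0
    have hb : 0 < α * (1 - x) := mul_pos hα h1x
    have ha1 : 0 < α * x + 1 := by linarith
    have hb1 : 0 < α * (1 - x) + 1 := by linarith
    have hα2 : 0 < α + 2 := by linarith
    have hc : 0 < 2 * Real.pi * x * (1 - x) := by positivity
    have hA1 := stirApprox_pos ha1
    have hA2 := stirApprox_pos hb1
    have hA3 := stirApprox_pos hα2
    have hx1a : 0 < x ^ (-(α * x)) := Real.rpow_pos_of_pos hx0 _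
    have hx2a : 0 < (1 - x) ^ (-(α * (1 - x))) := Real.rpow_pos_of_pos h1x _
    have hsq : 0 < Real.sqrt (α / (2 * Real.pi * x * (1 - x))) :=
      Real.sqrt_pos.mpr (div_pos hα hc)
    rw [hW]
    rw [Real.log_mul (by positivity) hx2a.ne', Real.log_mul (by positivity) hx1a.ne',
      Real.log_mul (by positivity) hsq.ne',
      Real.log_div (mul_pos hA1 hA2).ne' hA3.ne', Real.log_mul hA1.ne' hA2.ne',
      log_stirApprox ha1, log_stirApprox hb1, log_stirApprox hα2,
      Real.log_rpow hx0, Real.log_rpow h1x,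
      Real.log_sqrt (div_pos hα hc).le, Real.log_div hα.ne' hc.ne',
      Real.log_mul (by positivity : (2 * Real.pi * x : ℝ) ≠ 0) h1x.ne',
      Real.log_mul (by positivity : (2 * Real.pi : ℝ) ≠ 0) hx0.ne',
      Real.log_sqrt (by positivity : (0:ℝ) ≤ 2 * Real.pi)]
    have e1 : α * x + 1 = (α * x) * (1 + 1/(α * x)) := by field_simp
    have e2 : α * (1 - x) + 1 = (α * (1 - x)) * (1 + 1/(α * (1 - x))) := by field_simp
    have e3 : α + 2 = α * (1 + 2/α) := by field_simp
    have p1 : 0 < 1 + 1/(α * x) := by positivity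
    have p2 : 0 < 1 + 1/(α * (1 - x)) := by positivity
    have p3 : 0 < 1 + 2/α := by positivity
    have l1 : Real.log (α * x + 1)
        = Real.log α + Real.log x + Real.log (1 + 1/(α * x)) := by
      rw [e1, Real.log_mul ha.ne' p1.ne', Real.log_mul hα.ne' hx0.ne']
    have l2 : Real.log (α * (1 - x) + 1)
        = Real.log α + Real.log (1 - x) + Real.log (1 + 1/(α * (1 - x))) := by
      rw [e2, Real.log_mul hb.ne' p2.ne', Real.log_mul hα.ne' h1x.ne']
    have l3 : Real.log (α + 2) = Real.log α + Real.log (1 + 2/α) := by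
      rw [e3, Real.log_mul hα.ne' p3.ne']
    rw [l1, l2, l3]
    ring
  -- W tends to 1
  have hWpos : ∀ α : ℝ, 0 < α → 0 < W α := by
    intro α hα
    have ha1 : 0 < α * x + 1 := by nlinarith
    have hb1 : 0 < α * (1 - x) + 1 := by nlinarith
    have hα2 : 0 < α + 2 := by linarith
    have := stirApprox_pos ha1; have := stirApprox_pos hb1; have := stirApprox_pos hα2
    have := Real.rpow_pos_of_pos hx0 (-(α * x))
    have := Real.rpow_pos_of_pos h1x (-(α * (1 - x)))
    have hc : 0 < 2 * Real.pi * x * (1 - x) := by positivity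
    have hsq : 0 < Real.sqrt (α / (2 * Real.pi * x * (1 - x))) :=
      Real.sqrt_pos.mpr (div_pos hα hc)
    rw [hW]
    positivity
  have hlogW_lim : Tendsto (fun α => Real.log (W α)) atTop (𝓝 0) := by
    have hT1 : Tendsto (fun α : ℝ => (α * x + 1/2) * Real.log (1 + 1/(α * x)))
        atTop (𝓝 1) := by
      have hcomp : Tendsto (fun α : ℝ => α * x) atTop atTop :=
        Tendsto.atTop_mul_const hx0 tendsto_id
      exact (tendsto_add_mul_log_one_plus 1 (1/2)).comp hcomp
    have hT2 : Tendsto (fun α : ℝ => (α * (1 - x) + 1/2) * Real.log (1 + 1/(α * (1 - x))))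
        atTop (𝓝 1) := by
      have hcomp : Tendsto (fun α : ℝ => α * (1 - x)) atTop atTop :=
        Tendsto.atTop_mul_const h1x tendsto_id
      exact (tendsto_add_mul_log_one_plus 1 (1/2)).comp hcomp
    have hT3 : Tendsto (fun α : ℝ => (α + 3/2) * Real.log (1 + 2/α)) atTop (𝓝 2) :=
      tendsto_add_mul_log_one_plus 2 (3/2)
    have h := (hT1.add hT2).sub hT3
    rw [show (1:ℝ) + 1 - 2 = 0 by norm_num] at h
    refine h.congr' ?_
    filter_upwards [eventually_gt_atTop (0:ℝ)] with α hα
    exact (hlogW α hα).symm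
  have hWlim : Tendsto W atTop (𝓝 1) := by
    have h := (Real.continuous_exp.tendsto 0).comp hlogW_lim
    simp only [Function.comp, Real.exp_zero] at h
    refine h.congr' ?_
    filter_upwards [eventually_gt_atTop (0:ℝ)] with α hα
    exact Real.exp_log (hWpos α hα)
  -- Q factors
  have hQ := tendsto_gamma_div_stirApprox
  have hQ1 : Tendsto (fun α : ℝ => Real.Gamma (α * x + 1) / stirApprox (α * x + 1))
      atTop (𝓝 1) :=
    hQ.comp (tendsto_atTop_add_const_right _ 1 (Tendsto.atTop_mul_const hx0 tendsto_id))
  have hQ2 : Tendsto (fun α : ℝ =>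
      Real.Gamma (α * (1 - x) + 1) / stirApprox (α * (1 - x) + 1)) atTop (𝓝 1) :=
    hQ.comp (tendsto_atTop_add_const_right _ 1 (Tendsto.atTop_mul_const h1x tendsto_id))
  have hQ3 : Tendsto (fun α : ℝ => Real.Gamma (α + 2) / stirApprox (α + 2)) atTop (𝓝 1) :=
    hQ.comp (tendsto_atTop_add_const_right _ 2 tendsto_id)
  have hmain := ((hQ1.mul hQ2).div hQ3 one_ne_zero).mul hWlim
  rw [show ((1:ℝ) * 1 / 1) * 1 = 1 by norm_num] at hmain
  refine hmain.congr' ?_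
  filter_upwards [eventually_gt_atTop (0:ℝ)] with α hα
  have ha1 : 0 < α * x + 1 := by nlinarith
  have hb1 : 0 < α * (1 - x) + 1 := by nlinarith
  have hα2 : 0 < α + 2 := by linarith
  have hA1 := stirApprox_pos ha1
  have hA2 := stirApprox_pos hb1
  have hA3 := stirApprox_pos hα2
  have hG3 : 0 < Real.Gamma (α + 2) := Real.Gamma_pos_of_pos hα2
  have harg : α * x + 1 + (α * (1 - x) + 1) = α + 2 := by ring
  rw [hW]
  unfold betaFn
  rw [harg]
  simp only [Pi.div_apply]
  field_simp
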